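/- arXiv:2212.13744 — 2 statements merged into one kernel-verified Lean document; each statement's English description precedes it below -/
import Mathlib

section
/- Let E be a real Banach space, K ≥ 1 a natural number, and t_0 < t_1 < ... < t_K a grid of real numbers with maximal step size Δt = max_{1 ≤ k ≤ K} (t_k - t_{k-1}). Let y : ℝ → E and y' : ℝ → E be such that y has derivative y'(s) at every s ∈ [t_0, t_K] and y' is continuous on [t_0, t_K]. Then the piecewise-constant (left-endpoint) interpolation error satisfies ∑_{k=1}^{K} ∫_{t_{k-1}}^{t_k} ‖y(s) - y(t_{k-1})‖² ds ≤ Δt² · ∫_{t_0}^{t_K} ‖y'(s)‖² ds. -/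
open intervalIntegral Set

/-- Cauchy–Schwarz for continuous functions on an interval. -/
lemma cs_aux (a b : ℝ) (hab : a ≤ b) (f : ℝ → ℝ) (hf : ContinuousOn f (Set.Icc a b)) :
    (∫ s in a..b, f s) ^ 2 ≤ (b - a) * ∫ s in a..b, f s ^ 2 := by
  rcases eq_or_lt_of_le hab with rfl | hlt
  · simp
  have hba : 0 < b - a := by linarith
  have hfi : IntervalIntegrable f MeasureTheory.volume a b :=
    hf.intervalIntegrable_of_Icc hab
  have hf2i : IntervalIntegrable (fun s => f s ^ 2) MeasureTheory.volume a b :=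
    ((hf.pow 2)).intervalIntegrable_of_Icc hab
  set I := ∫ s in a..b, f s with hI
  set J := ∫ s in a..b, f s ^ 2 with hJ
  set m := I / (b - a) with hm
  have key : 0 ≤ ∫ s in a..b, (f s - m) ^ 2 :=
    intervalIntegral.integral_nonneg hab (fun _ _ => sq_nonneg _)
  have expand : (∫ s in a..b, (f s - m) ^ 2)
      = J - 2 * m * I + (b - a) * m ^ 2 := by
    have : (fun s => (f s - m) ^ 2)
        = fun s => f s ^ 2 - (2 * m) * f s + m ^ 2 := by
      funext s; ring
    rw [this]
    rw [intervalIntegral.integral_add ((hf2i.sub (hfi.const_mul (2 * m)))) intervalIntegrable_const,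
      intervalIntegral.integral_sub hf2i (hfi.const_mul (2 * m)),
      intervalIntegral.integral_const_mul, intervalIntegral.integral_const]
    simp only [smul_eq_mul]
    rfl
  rw [expand] at key
  have hmI : m * (b - a) = I := by rw [hm]; exact div_mul_cancel₀ I hba.ne'
  nlinarith [sq_nonneg m, sq_nonneg (I - m * (b - a))]

/-- One-interval estimate. -/
lemma step_aux {E : Type*} [NormedAddCommGroup E] [NormedSpace ℝ E] [CompleteSpace E]
    (a b Δ : ℝ) (hab : a ≤ b) (hΔ : b - a ≤ Δ)
    (y y' : ℝ → E) (hderiv : ∀ s ∈ Set.Icc a b, HasDerivAt y (y' s) s)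
    (hcont : ContinuousOn y' (Set.Icc a b)) :
    (∫ s in a..b, ‖y s - y a‖ ^ 2) ≤ Δ ^ 2 * ∫ s in a..b, ‖y' s‖ ^ 2 := by
  have hΔ0 : 0 ≤ Δ := le_trans (by linarith) hΔ
  have hnormint : IntervalIntegrable (fun s => ‖y' s‖ ^ 2) MeasureTheory.volume a b :=
    ((hcont.norm).pow 2).intervalIntegrable_of_Icc hab
  set C := ∫ s in a..b, ‖y' s‖ ^ 2 with hC
  have hC0 : 0 ≤ C := intervalIntegral.integral_nonneg hab (fun _ _ => sq_nonneg _)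
  have hpt : ∀ s ∈ Set.Icc a b, ‖y s - y a‖ ^ 2 ≤ Δ * C := by
    intro s hs
    obtain ⟨hs1, hs2⟩ := hs
    have hsub : Set.Icc a s ⊆ Set.Icc a b := Set.Icc_subset_Icc le_rfl hs2
    have hcont' : ContinuousOn y' (Set.Icc a s) := hcont.mono hsub
    have hftc : (∫ u in a..s, y' u) = y s - y a := by
      apply intervalIntegral.integral_eq_sub_of_hasDerivAt
      · intro x hx
        rw [Set.uIcc_of_le hs1] at hx
        exact hderiv x (hsub hx)
      · exact hcont'.intervalIntegrable_of_Icc hs1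
    have hnorm : ‖y s - y a‖ ≤ ∫ u in a..s, ‖y' u‖ := by
      rw [← hftc]
      exact intervalIntegral.norm_integral_le_integral_norm hs1
    have hsq : ‖y s - y a‖ ^ 2 ≤ (∫ u in a..s, ‖y' u‖) ^ 2 :=
      pow_le_pow_left₀ (norm_nonneg _) hnorm 2
    have hcs : (∫ u in a..s, ‖y' u‖) ^ 2 ≤ (s - a) * ∫ u in a..s, ‖y' u‖ ^ 2 :=
      cs_aux a s hs1 (fun u => ‖y' u‖) hcont'.norm
    have hmonoI : (∫ u in a..s, ‖y' u‖ ^ 2) ≤ C :=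
      intervalIntegral.integral_mono_interval le_rfl hs1 hs2
        (MeasureTheory.ae_of_all _ (fun _ => sq_nonneg _)) hnormint
    have hI0 : 0 ≤ ∫ u in a..s, ‖y' u‖ ^ 2 :=
      intervalIntegral.integral_nonneg hs1 (fun _ _ => sq_nonneg _)
    nlinarith
  have hycont : ContinuousOn (fun s => ‖y s - y a‖ ^ 2) (Set.Icc a b) := by
    have hy : ContinuousOn y (Set.Icc a b) :=
      fun s hs => (hderiv s hs).continuousAt.continuousWithinAt
    exact ((hy.sub continuousOn_const).norm.pow 2)
  have hleft : IntervalIntegrable (fun s => ‖y s - y a‖ ^ 2) MeasureTheory.volume a b :=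
    hycont.intervalIntegrable_of_Icc hab
  calc (∫ s in a..b, ‖y s - y a‖ ^ 2) ≤ ∫ _ in a..b, Δ * C := by
        apply intervalIntegral.integral_mono_on hab hleft intervalIntegrable_const hpt
    _ = (b - a) * (Δ * C) := by rw [intervalIntegral.integral_const]; simp
    _ ≤ Δ ^ 2 * C := by
        nlinarith [mul_nonneg hΔ0 hC0, mul_le_mul_of_nonneg_right hΔ (mul_nonneg hΔ0 hC0)]

/-- Squared `L²`-in-time error of piecewise-constant (left-endpoint)
interpolation on a grid `t 0 < t 1 < ... < t K` is bounded by `Δt²` times the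
squared `L²` norm of the time derivative, where `Δt` is the maximal step size. -/
theorem stmt5 {E : Type*} [NormedAddCommGroup E] [NormedSpace ℝ E] [CompleteSpace E]
    (K : ℕ) (hK : 1 ≤ K) (t : ℕ → ℝ)
    (hmono : ∀ k, k < K → t k < t (k + 1))
    (Δt : ℝ)
    (hΔt : Δt = (Finset.Icc 1 K).sup' (Finset.nonempty_Icc.mpr hK)
      (fun k => t k - t (k - 1)))
    (y y' : ℝ → E)
    (hderiv : ∀ s ∈ Set.Icc (t 0) (t K), HasDerivAt y (y' s) s)
    (hcont : ContinuousOn y' (Set.Icc (t 0) (t K))) :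
    ∑ k ∈ Finset.Icc 1 K, ∫ s in (t (k - 1))..(t k), ‖y s - y (t (k - 1))‖ ^ 2 ≤
      Δt ^ 2 * ∫ s in (t 0)..(t K), ‖y' s‖ ^ 2 := by
  -- monotonicity of the grid
  have hle : ∀ j, j ≤ K → ∀ i, i ≤ j → t i ≤ t j := by
    intro j
    induction j with
    | zero =>
      intro _ i hi
      obtain rfl : i = 0 := Nat.le_zero.mp hi
      exact le_rfl
    | succ n ih =>
      intro hK' i hi
      rcases Nat.lt_succ_iff_lt_or_eq.mp (Nat.lt_succ_of_le hi) with h | rfl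
      · exact (ih (by omega) i (by omega)).trans (hmono n (by omega)).le
      · exact le_rfl
  have hsub : ∀ i, i < K → Set.Icc (t i) (t (i + 1)) ⊆ Set.Icc (t 0) (t K) :=
    fun i hi => Set.Icc_subset_Icc (hle i (by omega) 0 (by omega))
      (hle K le_rfl (i + 1) (by omega))
  have hstepk : ∀ i, i < K → t (i + 1) - t i ≤ Δt := by
    intro i hi
    rw [hΔt]
    have hmem : i + 1 ∈ Finset.Icc 1 K := Finset.mem_Icc.mpr ⟨by omega, by omega⟩
    have := Finset.le_sup' (f := fun k => t k - t (k - 1)) hmem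
    simpa only [Nat.add_sub_cancel] using this
  have hintk : ∀ i, i < K →
      IntervalIntegrable (fun s => ‖y' s‖ ^ 2) MeasureTheory.volume (t i) (t (i + 1)) :=
    fun i hi => (((hcont.mono (hsub i hi)).norm.pow 2)).intervalIntegrable_of_Icc
      (hmono i hi).le
  -- reindex the sum
  have hreindex : ∑ k ∈ Finset.Icc 1 K, (∫ s in (t (k - 1))..(t k), ‖y s - y (t (k - 1))‖ ^ 2)
      = ∑ i ∈ Finset.range K, ∫ s in (t i)..(t (i + 1)), ‖y s - y (t i)‖ ^ 2 := by
    rw [show Finset.Icc 1 K = Finset.Ico 1 (K + 1) by rw [Finset.Ico_add_one_right_eq_Icc],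
      Finset.sum_Ico_eq_sum_range]
    simp [Nat.add_comm 1]
  rw [hreindex]
  have hterm : ∀ i ∈ Finset.range K,
      (∫ s in (t i)..(t (i + 1)), ‖y s - y (t i)‖ ^ 2)
        ≤ Δt ^ 2 * ∫ s in (t i)..(t (i + 1)), ‖y' s‖ ^ 2 := by
    intro i hi
    rw [Finset.mem_range] at hi
    exact step_aux (t i) (t (i + 1)) Δt (hmono i hi).le (hstepk i hi) y y'
      (fun s hs => hderiv s (hsub i hi hs)) (hcont.mono (hsub i hi))
  calc (∑ i ∈ Finset.range K, ∫ s in (t i)..(t (i + 1)), ‖y s - y (t i)‖ ^ 2)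
      ≤ ∑ i ∈ Finset.range K, Δt ^ 2 * ∫ s in (t i)..(t (i + 1)), ‖y' s‖ ^ 2 :=
        Finset.sum_le_sum hterm
    _ = Δt ^ 2 * ∑ i ∈ Finset.range K, ∫ s in (t i)..(t (i + 1)), ‖y' s‖ ^ 2 := by
        rw [Finset.mul_sum]
    _ = Δt ^ 2 * ∫ s in (t 0)..(t K), ‖y' s‖ ^ 2 := by
        rw [intervalIntegral.sum_integral_adjacent_intervals hintk]
end

section
/- Let n ≥ 1, let M, V : Matrix (Fin n) (Fin n) ℝ be positive definite matrices, let w : Fin n → ℝ satisfy w_i ≥ 0 for all i, let Δt > 0, c > 0, a ≥ 0 be real numbers, and let F : Fin n → ℝ. Then there exists a unique y ∈ ℝⁿ (i.e., y : Fin n → ℝ) such that (1/Δt) • (M.mulVec y) + (c/2) • (V.mulVec y) + (a/2) • (fun i => w_i · max(0, y_i)) = F; that is, each Crank–Nicolson step of the nonsmooth scheme admits a unique solution. -/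
open scoped Matrix

namespace Stmt12Aux

variable {n : ℕ}

lemma quad_cont (A : Matrix (Fin n) (Fin n) ℝ) :
    Continuous fun x : EuclideanSpace ℝ (Fin n) =>
      (WithLp.equiv 2 _ x) ⬝ᵥ A *ᵥ (WithLp.equiv 2 _ x) := by
  have h1 : Continuous fun v : Fin n → ℝ => v ⬝ᵥ A *ᵥ v := by
    simp only [dotProduct, Matrix.mulVec]
    exact continuous_finset_sum _ fun i _ => (continuous_apply i).mul
      (continuous_finset_sum _ fun j _ => (continuous_const.mul (continuous_apply j)))
  exact h1.comp (PiLp.continuous_ofLp (p := 2) (β := fun _ : Fin n => ℝ))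

lemma coercive (hn : 1 ≤ n) (A : Matrix (Fin n) (Fin n) ℝ)
    (hA : ∀ x : Fin n → ℝ, x ≠ 0 → 0 < x ⬝ᵥ A *ᵥ x) :
    ∃ α > (0:ℝ), ∀ x : EuclideanSpace ℝ (Fin n),
      α * ‖x‖ ^ 2 ≤ (WithLp.equiv 2 _ x) ⬝ᵥ A *ᵥ (WithLp.equiv 2 _ x) := by
  set q : EuclideanSpace ℝ (Fin n) → ℝ :=
    fun x => (WithLp.equiv 2 _ x) ⬝ᵥ A *ᵥ (WithLp.equiv 2 _ x) with hq
  have hne : (Metric.sphere (0 : EuclideanSpace ℝ (Fin n)) 1).Nonempty := by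
    refine ⟨EuclideanSpace.single ⟨0, hn⟩ 1, ?_⟩
    simp [EuclideanSpace.norm_single]
  obtain ⟨x₀, hx₀s, hmin⟩ := ((isCompact_sphere (0 : EuclideanSpace ℝ (Fin n)) 1).exists_isMinOn
    hne (quad_cont A).continuousOn)
  have hx₀norm : ‖x₀‖ = 1 := by simpa using hx₀s
  have hx₀ne : (WithLp.equiv 2 (Fin n → ℝ)) x₀ ≠ 0 := by
    intro h
    have : x₀ = 0 := by
      ext i; have := congrFun h i; simpa using this
    rw [this] at hx₀norm; simp at hx₀norm
  refine ⟨q x₀, hA _ hx₀ne, fun x => ?_⟩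
  rcases eq_or_ne x 0 with rfl | hx
  · simp [hq, dotProduct]
  · have hnx : (0:ℝ) < ‖x‖ := norm_pos_iff.2 hx
    have hu : (‖x‖⁻¹ • x) ∈ Metric.sphere (0 : EuclideanSpace ℝ (Fin n)) 1 := by
      simp [norm_smul, abs_of_pos (inv_pos.2 hnx), inv_mul_cancel₀ hnx.ne']
    have h2 : q x₀ ≤ q (‖x‖⁻¹ • x) := hmin hu
    have hsc : q (‖x‖⁻¹ • x) = ‖x‖⁻¹ ^ 2 * q x := by
      simp only [hq, WithLp.equiv_apply, WithLp.ofLp_smul]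
      rw [Matrix.mulVec_smul, dotProduct_smul, smul_dotProduct]
      ring_nf
    rw [hsc] at h2
    have h3 := mul_le_mul_of_nonneg_right h2 (by positivity : (0:ℝ) ≤ ‖x‖ ^ 2)
    calc q x₀ * ‖x‖ ^ 2 ≤ ‖x‖⁻¹ ^ 2 * q x * ‖x‖ ^ 2 := h3
      _ = q x := by field_simp

lemma l2_comp {u v : EuclideanSpace ℝ (Fin n)} {C : ℝ} (hC : 0 ≤ C)
    (h : ∀ i, |u i| ≤ C * |v i|) : ‖u‖ ≤ C * ‖v‖ := by
  rw [EuclideanSpace.norm_eq, EuclideanSpace.norm_eq,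
    show C = Real.sqrt (C ^ 2) by rw [Real.sqrt_sq hC],
    ← Real.sqrt_mul (by positivity), Finset.mul_sum]
  apply Real.sqrt_le_sqrt
  apply Finset.sum_le_sum
  intro i _
  simp only [Real.norm_eq_abs]
  calc |u i| ^ 2 ≤ (C * |v i|) ^ 2 := by
        apply pow_le_pow_left₀ (abs_nonneg _) (h i)
    _ = C ^ 2 * |v i| ^ 2 := by ring

lemma max_mono_prod (s t : ℝ) : 0 ≤ (max 0 s - max 0 t) * (s - t) := by
  rcases le_total s t with h | h
  · have h1 : max 0 s ≤ max 0 t := max_le_max le_rfl h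
    have h2 := mul_nonneg (by linarith : (0:ℝ) ≤ max 0 t - max 0 s) (by linarith : (0:ℝ) ≤ t - s)
    nlinarith
  · have h1 : max 0 t ≤ max 0 s := max_le_max le_rfl h
    exact mul_nonneg (by linarith) (by linarith)

/-- Main abstract solvability lemma. -/
lemma main (hn : 1 ≤ n) (A : Matrix (Fin n) (Fin n) ℝ)
    (hA : ∀ x : Fin n → ℝ, x ≠ 0 → 0 < x ⬝ᵥ A *ᵥ x)
    (N : (Fin n → ℝ) → (Fin n → ℝ)) {W : ℝ} (hW : 0 ≤ W)
    (hmono : ∀ x y : Fin n → ℝ, 0 ≤ ∑ i, (N x i - N y i) * (x i - y i))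
    (hlip : ∀ x y : Fin n → ℝ, ∀ i, |N x i - N y i| ≤ W * |x i - y i|)
    (F : Fin n → ℝ) :
    ∃! y : Fin n → ℝ, A *ᵥ y + N y = F := by
  classical
  set E := EuclideanSpace ℝ (Fin n)
  set e : E ≃ (Fin n → ℝ) := WithLp.equiv 2 (Fin n → ℝ) with he
  obtain ⟨α, hα, hcoer⟩ := coercive hn A hA
  set B := (Matrix.toEuclideanLin (𝕜 := ℝ) A).toContinuousLinearMap with hB
  have hBapp : ∀ x : E, ∀ i, (B x) i = (A *ᵥ e x) i := fun x i => rfl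
  set G : E → E := fun z => e.symm (A *ᵥ e z + N (e z)) with hG
  have hGapp : ∀ z : E, ∀ i, (G z) i = (A *ᵥ e z) i + N (e z) i := fun z i => rfl
  set L : ℝ := ‖B‖ + W + 1 with hL
  have hL0 : 0 < L := by positivity
  -- Lipschitz bound for G
  have hGdiff : ∀ x y : E, G x - G y
      = B (x - y) + e.symm (fun i => N (e x) i - N (e y) i) := by
    intro x y
    apply e.injective
    funext i
    have : e (G x - G y) i = (G x) i - (G y) i := rfl
    rw [this]
    have h2 : e (B (x - y) + e.symm fun i => N (e x) i - N (e y) i) i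
        = (B (x-y)) i + (N (e x) i - N (e y) i) := rfl
    rw [h2, hGapp, hGapp, hBapp]
    have : e (x - y) = e x - e y := rfl
    rw [this, Matrix.mulVec_sub]
    simp [Pi.sub_apply]
    ring
  have hGlip : ∀ x y : E, ‖G x - G y‖ ≤ L * ‖x - y‖ := by
    intro x y
    rw [hGdiff]
    calc ‖B (x - y) + e.symm fun i => N (e x) i - N (e y) i‖
        ≤ ‖B (x - y)‖ + ‖(e.symm fun i => N (e x) i - N (e y) i : E)‖ := norm_add_le _ _
      _ ≤ ‖B‖ * ‖x - y‖ + W * ‖x - y‖ := by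
          gcongr
          · exact B.le_opNorm _
          · apply l2_comp hW
            intro i
            have h1 : (e.symm fun i => N (e x) i - N (e y) i : E) i
                = N (e x) i - N (e y) i := rfl
            have h2 : (x - y) i = e x i - e y i := rfl
            rw [h1, h2]
            exact hlip (e x) (e y) i
      _ ≤ L * ‖x - y‖ := by
          rw [hL]; nlinarith [norm_nonneg (x - y)]
  -- strong monotonicity
  have hGmono : ∀ x y : E, α * ‖x - y‖ ^ 2 ≤ inner ℝ (G x - G y) (x - y) := by
    intro x y
    have hinner : (inner ℝ (G x - G y) (x - y) : ℝ)
        = ∑ i, ((A *ᵥ (e x - e y)) i + (N (e x) i - N (e y) i)) * (e x i - e y i) := by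
      rw [PiLp.inner_apply]
      apply Finset.sum_congr rfl
      intro i _
      have h1 : (G x - G y) i = ((A *ᵥ e x) i + N (e x) i) - ((A *ᵥ e y) i + N (e y) i) := rfl
      have h2 : (x - y) i = e x i - e y i := rfl
      rw [RCLike.inner_apply, conj_trivial, h1, h2, Matrix.mulVec_sub]
      simp only [Pi.sub_apply]
      ring
    rw [hinner]
    have hsplit : ∑ i, ((A *ᵥ (e x - e y)) i + (N (e x) i - N (e y) i)) * (e x i - e y i)
        = (e x - e y) ⬝ᵥ A *ᵥ (e x - e y) + ∑ i, (N (e x) i - N (e y) i) * (e x i - e y i) := by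
      rw [dotProduct, ← Finset.sum_add_distrib]
      apply Finset.sum_congr rfl
      intro i _
      simp only [Pi.sub_apply]; ring
    rw [hsplit]
    have hm := hmono (e x) (e y)
    have hc := hcoer (x - y)
    have hexy : e (x - y) = e x - e y := rfl
    rw [hexy] at hc
    have hmono' : 0 ≤ ∑ i, (N (e x) i - N (e y) i) * (e x i - e y i) := hm
    linarith
  -- the contraction map
  set Fe : E := e.symm F with hFe
  set τ : ℝ := α / L ^ 2 with hτ
  have hτ0 : 0 < τ := by positivity
  set T : E → E := fun z => z - τ • (G z - Fe) with hT
  have hTdiff : ∀ x y : E, T x - T y = (x - y) - τ • (G x - G y) := by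
    intro x y
    simp only [hT, smul_sub]
    abel
  set k2 : ℝ := 1 - α ^ 2 / L ^ 2 with hk2
  have hk2lt : k2 < 1 := by
    rw [hk2]
    have : 0 < α ^ 2 / L ^ 2 := by positivity
    linarith
  have hsq : ∀ x y : E, ‖T x - T y‖ ^ 2 ≤ k2 * ‖x - y‖ ^ 2 := by
    intro x y
    rw [hTdiff]
    rw [norm_sub_sq_real]
    have h1 : (inner ℝ (x - y) (τ • (G x - G y)) : ℝ) = τ * inner ℝ (G x - G y) (x - y) := by
      rw [real_inner_smul_right, real_inner_comm]
    have h2 : ‖τ • (G x - G y)‖ ^ 2 = τ ^ 2 * ‖G x - G y‖ ^ 2 := by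
      rw [norm_smul, Real.norm_eq_abs, abs_of_pos hτ0, mul_pow]
    rw [h1, h2]
    have h3 := hGmono x y
    have h4 := hGlip x y
    have h5 : ‖G x - G y‖ ^ 2 ≤ L ^ 2 * ‖x - y‖ ^ 2 := by
      have := pow_le_pow_left₀ (norm_nonneg _) h4 2
      calc ‖G x - G y‖ ^ 2 ≤ (L * ‖x - y‖) ^ 2 := this
        _ = L ^ 2 * ‖x - y‖ ^ 2 := by ring
    have hτL : τ ^ 2 * (L ^ 2 * ‖x - y‖ ^ 2) = (α ^ 2 / L ^ 2) * ‖x - y‖ ^ 2 := by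
      rw [hτ]; field_simp
    have hτα : 2 * (τ * (α * ‖x - y‖ ^ 2)) = 2 * (α ^ 2 / L ^ 2) * ‖x - y‖ ^ 2 := by
      rw [hτ]; field_simp
    rw [hk2]
    have e1 := mul_le_mul_of_nonneg_left h3 (le_of_lt hτ0)
    have e2 := mul_le_mul_of_nonneg_left h5 (by positivity : (0:ℝ) ≤ τ ^ 2)
    have hLne : L ≠ 0 := hL0.ne'
    calc ‖x - y‖ ^ 2 - 2 * (τ * inner ℝ (G x - G y) (x - y)) + τ ^ 2 * ‖G x - G y‖ ^ 2
        ≤ ‖x - y‖ ^ 2 - 2 * (τ * (α * ‖x - y‖ ^ 2)) + τ ^ 2 * (L ^ 2 * ‖x - y‖ ^ 2) := by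
          linarith
      _ = (1 - α ^ 2 / L ^ 2) * ‖x - y‖ ^ 2 := by
          rw [hτ]; field_simp; ring
  set K : ℝ := Real.sqrt (max k2 0) with hK
  have hK0 : 0 ≤ K := Real.sqrt_nonneg _
  have hK1 : K < 1 := by
    rw [hK, show (1:ℝ) = Real.sqrt 1 by rw [Real.sqrt_one]]
    exact Real.sqrt_lt_sqrt (le_max_right _ _) (max_lt hk2lt one_pos)
  have hTlip : ∀ x y : E, ‖T x - T y‖ ≤ K * ‖x - y‖ := by
    intro x y
    have h1 : ‖T x - T y‖ ^ 2 ≤ (K * ‖x - y‖) ^ 2 := by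
      have : (K * ‖x - y‖) ^ 2 = max k2 0 * ‖x - y‖ ^ 2 := by
        rw [mul_pow, hK, Real.sq_sqrt (le_max_right _ _)]
      rw [this]
      calc ‖T x - T y‖ ^ 2 ≤ k2 * ‖x - y‖ ^ 2 := hsq x y
        _ ≤ max k2 0 * ‖x - y‖ ^ 2 := by
            apply mul_le_mul_of_nonneg_right (le_max_left _ _) (by positivity)
    calc ‖T x - T y‖ = Real.sqrt (‖T x - T y‖ ^ 2) := by rw [Real.sqrt_sq (@norm_nonneg (EuclideanSpace ℝ (Fin n)) _ _)]
      _ ≤ Real.sqrt ((K * ‖x - y‖) ^ 2) := Real.sqrt_le_sqrt h1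
      _ = K * ‖x - y‖ := Real.sqrt_sq (mul_nonneg hK0 (@norm_nonneg (EuclideanSpace ℝ (Fin n)) _ _))
  have hcontr : ContractingWith K.toNNReal T := by
    constructor
    · exact_mod_cast (Real.coe_toNNReal K hK0).symm ▸ hK1
    · apply LipschitzWith.of_dist_le_mul
      intro x y
      rw [dist_eq_norm, dist_eq_norm, Real.coe_toNNReal K hK0]
      exact hTlip x y
  -- fixed point ↔ solution
  have hfix : ∀ z : E, T z = z ↔ G z = Fe := by
    intro z
    rw [hT]
    constructor
    · intro h
      have h2 : τ • (G z - Fe) = 0 := by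
        have := sub_eq_self.1 h
        exact this
      rcases smul_eq_zero.1 h2 with h3 | h3
      · exact absurd h3 hτ0.ne'
      · exact sub_eq_zero.1 h3
    · intro h
      simp [h]
  have hEnonempty : Nonempty E := ⟨0⟩
  set z₀ := ContractingWith.fixedPoint T hcontr with hz₀
  have hz₀fix : T z₀ = z₀ := hcontr.fixedPoint_isFixedPt
  have hz₀sol : G z₀ = Fe := (hfix z₀).1 hz₀fix
  refine ⟨e z₀, ?_, ?_⟩
  · have := congrArg e hz₀sol
    have h2 : e (G z₀) = A *ᵥ e z₀ + N (e z₀) := rfl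
    have h3 : e Fe = F := rfl
    rw [h2, h3] at this
    exact this
  · intro y hy
    have hGy : G (e.symm y) = Fe := by
      apply e.injective
      have h2 : e (G (e.symm y)) = A *ᵥ (e (e.symm y)) + N (e (e.symm y)) := rfl
      have h3 : e (e.symm y) = y := e.apply_symm_apply y
      rw [h2, h3, hy]
      rfl
    have := hcontr.fixedPoint_unique ((hfix (e.symm y)).2 hGy)
    rw [← hz₀] at this
    calc y = e (e.symm y) := (e.apply_symm_apply y).symm
      _ = e z₀ := by rw [this]

end Stmt12Aux

/-- Unique solvability of each Crank–Nicolson step of the nonsmooth scheme: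
the equation `(1/Δt) M y + (c/2) V y + (a/2) diag(w) max{0, y} = F` has a
unique solution. -/
theorem stmt12 {n : ℕ} (hn : 1 ≤ n)
    (M V : Matrix (Fin n) (Fin n) ℝ) (hM : M.PosDef) (hV : V.PosDef)
    (w : Fin n → ℝ) (hw : ∀ i, 0 ≤ w i)
    (Δt c a : ℝ) (hΔt : 0 < Δt) (hc : 0 < c) (ha : 0 ≤ a)
    (F : Fin n → ℝ) :
    ∃! y : Fin n → ℝ,
      (1 / Δt) • M.mulVec y + (c / 2) • V.mulVec y
          + (a / 2) • (fun i => w i * max 0 (y i)) = F := by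
  set A : Matrix (Fin n) (Fin n) ℝ := (1 / Δt) • M + (c / 2) • V with hA
  set N : (Fin n → ℝ) → (Fin n → ℝ) := fun y i => (a / 2) * (w i * max 0 (y i)) with hN
  have hApos : ∀ x : Fin n → ℝ, x ≠ 0 → 0 < x ⬝ᵥ A *ᵥ x := by
    intro x hx
    have hMx : 0 < x ⬝ᵥ M *ᵥ x := by have := hM.dotProduct_mulVec_pos hx; simpa using this
    have hVx : 0 < x ⬝ᵥ V *ᵥ x := by have := hV.dotProduct_mulVec_pos hx; simpa using this
    rw [hA, Matrix.add_mulVec, Matrix.smul_mulVec, Matrix.smul_mulVec,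
      dotProduct_add, dotProduct_smul, dotProduct_smul]
    have h1 : 0 < (1 / Δt) := by positivity
    have h2 : 0 < (c / 2) := by positivity
    have := add_pos (mul_pos h1 hMx) (mul_pos h2 hVx)
    simpa [smul_eq_mul] using this
  set W : ℝ := (a / 2) * ∑ i, w i with hW
  have hW0 : 0 ≤ W := by
    apply mul_nonneg (by positivity)
    exact Finset.sum_nonneg fun i _ => hw i
  have hmono : ∀ x y : Fin n → ℝ, 0 ≤ ∑ i, (N x i - N y i) * (x i - y i) := by
    intro x y
    apply Finset.sum_nonneg
    intro i _
    have h1 : N x i - N y i = (a / 2) * w i * (max 0 (x i) - max 0 (y i)) := by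
      rw [hN]; ring
    rw [h1]
    have := Stmt12Aux.max_mono_prod (x i) (y i)
    have h2 : 0 ≤ (a / 2) * w i := mul_nonneg (by positivity) (hw i)
    calc (0:ℝ) = (a / 2) * w i * 0 := by ring
      _ ≤ (a / 2) * w i * ((max 0 (x i) - max 0 (y i)) * (x i - y i)) :=
          mul_le_mul_of_nonneg_left this h2
      _ = (a / 2) * w i * (max 0 (x i) - max 0 (y i)) * (x i - y i) := by ring
  have hlip : ∀ x y : Fin n → ℝ, ∀ i, |N x i - N y i| ≤ W * |x i - y i| := by
    intro x y i
    have h1 : N x i - N y i = ((a / 2) * w i) * (max 0 (x i) - max 0 (y i)) := by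
      rw [hN]; ring
    rw [h1, abs_mul, abs_of_nonneg (mul_nonneg (by positivity : (0:ℝ) ≤ a / 2) (hw i))]
    have h2 : |max 0 (x i) - max 0 (y i)| ≤ |x i - y i| := by
      rw [max_comm 0 (x i), max_comm 0 (y i)]
      exact abs_max_sub_max_le_abs _ _ _
    have h3 : (a / 2) * w i ≤ W := by
      rw [hW]
      apply mul_le_mul_of_nonneg_left _ (by positivity : (0:ℝ) ≤ a / 2)
      exact Finset.single_le_sum (fun j _ => hw j) (Finset.mem_univ i)
    calc (a / 2) * w i * |max 0 (x i) - max 0 (y i)|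
        ≤ (a / 2) * w i * |x i - y i| :=
          mul_le_mul_of_nonneg_left h2 (mul_nonneg (by positivity) (hw i))
      _ ≤ W * |x i - y i| := mul_le_mul_of_nonneg_right h3 (abs_nonneg _)
  have hmain := Stmt12Aux.main hn A hApos N hW0 hmono hlip F
  have hkey : ∀ y : Fin n → ℝ,
      ((1 / Δt) • M.mulVec y + (c / 2) • V.mulVec y
          + (a / 2) • (fun i => w i * max 0 (y i)) = F) ↔ (A *ᵥ y + N y = F) := by
    intro y
    have hEq : (1 / Δt) • M.mulVec y + (c / 2) • V.mulVec y
          + (a / 2) • (fun i => w i * max 0 (y i)) = A *ᵥ y + N y := by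
      funext i
      rw [hA, hN]
      simp [Matrix.add_mulVec, Matrix.smul_mulVec, Matrix.mulVec, smul_eq_mul]
    rw [hEq]
  exact (existsUnique_congr hkey).2 hmain
end
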